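/- Assume the Bregman PDMM setup (see context) at a fixed iteration t, with the mirror-averaging optimality conditions at steps t and t+1, the primal optimality condition at step t+1, the dual update, and parameters satisfying 0 < γ < μσ and τ ≤ ρ(μσ − γ). Let (x*, ν*) be a KKT point: x* ∈ 𝒳, ν* = (ν*_1, …, ν*_m), and for each i there exists g*_i with ⟨g*_i, x* − v⟩ ≥ 0 for all v ∈ 𝒳 and f_i(v) ≥ f_i(x*) + ⟨−ν*_i + Σ_j P_{ij} ν*_j − g*_i, v − x*⟩ for all v ∈ ℝ^n. Define the Lyapunov function V(s) = (1/(2τρ)) Σ_i ‖ν*_i − ν_i^s‖_2² + Σ_i B_φ(x*, y_i^s) + Σ_i (δ_i/ρ) B_{φ_i}(x*, x_i^s) and the residual R(t+1) = (γ/2) Σ_i ‖x_i^{t+1} − Σ_j P_{ij} x_j^{t+1}‖_2² + Σ_i B_φ(x_i^{t+1}, y_i^t) + Σ_i (δ_i/ρ) B_{φ_i}(x_i^{t+1}, x_i^t). Then V(t) − V(t+1) ≥ R(t+1). -/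

import Mathlib

open scoped RealInnerProductSpace BigOperators

/-- The Bregman divergence `B_φ(u,v) = φ(u) − φ(v) − ⟨∇φ(v), u − v⟩`. -/
noncomputable def breg {n : ℕ} (φ : EuclideanSpace ℝ (Fin n) → ℝ)
    (u v : EuclideanSpace ℝ (Fin n)) : ℝ :=
  φ u - φ v - ⟪gradient φ v, u - v⟫

/-- The ℓ_p norm on ℝ^n: `‖w‖_p = (Σ_k |w_k|^p)^(1/p)`. -/
noncomputable def lpnorm {n : ℕ} (p : ℝ) (w : EuclideanSpace ℝ (Fin n)) : ℝ :=
  (∑ k, |w k| ^ p) ^ (1 / p)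

lemma breg_three_point {n : ℕ} (φ : EuclideanSpace ℝ (Fin n) → ℝ)
    (u v w : EuclideanSpace ℝ (Fin n)) :
    ⟪gradient φ w - gradient φ v, u - v⟫ = breg φ u v + breg φ v w - breg φ u w := by
  simp only [breg, inner_sub_left, inner_sub_right]
  ring

lemma sum_rpow_le_rpow_sum {ι : Type*} (s : Finset ι) (a : ι → ℝ) (ha : ∀ i ∈ s, 0 ≤ a i)
    {q : ℝ} (hq : 1 ≤ q) : ∑ i ∈ s, a i ^ q ≤ (∑ i ∈ s, a i) ^ q := by
  set S := ∑ i ∈ s, a i with hS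
  have hS0 : 0 ≤ S := Finset.sum_nonneg ha
  rcases hS0.eq_or_lt with h | h
  · have : ∀ i ∈ s, a i = 0 := by
      intro i hi
      exact le_antisymm (by nlinarith [Finset.single_le_sum ha hi, h]) (ha i hi)
    have h1 : ∑ i ∈ s, a i ^ q = 0 := by
      apply Finset.sum_eq_zero; intro i hi
      rw [this i hi, Real.zero_rpow (by linarith)]
    rw [h1, ← h, Real.zero_rpow (by linarith)]
  · calc ∑ i ∈ s, a i ^ q ≤ ∑ i ∈ s, S ^ (q - 1) * a i := by
          apply Finset.sum_le_sum; intro i hi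
          rcases (ha i hi).eq_or_lt with h0 | h0
          · rw [← h0, Real.zero_rpow (by linarith), mul_zero]
          · have h1 : a i ^ (q - 1) * a i ^ (1:ℝ) = a i ^ q := by
              rw [← Real.rpow_add h0]; congr 1; ring
            rw [Real.rpow_one] at h1
            rw [← h1]
            apply mul_le_mul_of_nonneg_right _ (le_of_lt h0)
            exact Real.rpow_le_rpow (le_of_lt h0) (Finset.single_le_sum ha hi) (by linarith)
    _ = S ^ (q - 1) * S := by rw [← Finset.mul_sum]
    _ = S ^ q := by
          have h1 : S ^ (q - 1) * S ^ (1:ℝ) = S ^ q := by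
            rw [← Real.rpow_add h]; congr 1; ring
          rw [Real.rpow_one] at h1; rw [h1]

lemma lpnorm_sq_lower {n : ℕ} {p : ℝ} (hp : 1 ≤ p) (w : EuclideanSpace ℝ (Fin n)) :
    min 1 ((n : ℝ) ^ (2 / p - 1)) * ‖w‖ ^ 2 ≤ lpnorm p w ^ 2 := by
  have hp0 : 0 < p := lt_of_lt_of_le one_pos hp
  rcases Nat.eq_zero_or_pos n with hn | hn
  · subst hn
    have hw : w = 0 := Subsingleton.elim _ _
    have : lpnorm p w = 0 := by
      simp [lpnorm, Real.zero_rpow (by positivity : 1 / p ≠ 0), Real.zero_rpow (by positivity : p⁻¹ ≠ 0)]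
    rw [this, hw, norm_zero]
    norm_num
  have hnpos : (0:ℝ) < (n:ℝ) := by exact_mod_cast hn
  set A := ∑ k, |w k| ^ p with hA
  have hA0 : 0 ≤ A := Finset.sum_nonneg fun k _ => Real.rpow_nonneg (abs_nonneg _) _
  have hnormsq : ‖w‖ ^ 2 = ∑ k, |w k| ^ (2:ℝ) := by
    rw [EuclideanSpace.norm_eq, Real.sq_sqrt (Finset.sum_nonneg fun k _ => sq_nonneg _)]
    apply Finset.sum_congr rfl
    intro k _
    rw [Real.norm_eq_abs, ← Real.rpow_natCast |w k| 2]
    norm_num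
  have hlp2 : lpnorm p w ^ 2 = A ^ (2 / p) := by
    rw [lpnorm, ← Real.rpow_natCast (A ^ (1/p)) 2, ← Real.rpow_mul hA0]
    congr 1
    push_cast
    ring
  rw [hnormsq, hlp2]
  rcases le_total p 2 with h2 | h2
  · -- p ≤ 2 : min ≤ 1 and ∑ |w|^2 ≤ A^(2/p)
    have key : ∑ k, |w k| ^ (2:ℝ) ≤ A ^ (2 / p) := by
      have h := sum_rpow_le_rpow_sum Finset.univ (fun k => |w k| ^ p)
        (fun k _ => Real.rpow_nonneg (abs_nonneg _) _) (q := 2 / p)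
        ((one_le_div hp0).mpr h2)
      calc ∑ k, |w k| ^ (2:ℝ) = ∑ k, (|w k| ^ p) ^ (2 / p) := by
            apply Finset.sum_congr rfl; intro k _
            rw [← Real.rpow_mul (abs_nonneg _)]
            congr 1
            field_simp
        _ ≤ A ^ (2 / p) := h
    have hb0 : 0 ≤ ∑ k, |w k| ^ (2:ℝ) :=
      Finset.sum_nonneg fun k _ => Real.rpow_nonneg (abs_nonneg _) _
    calc min 1 ((n : ℝ) ^ (2 / p - 1)) * ∑ k, |w k| ^ (2:ℝ)
        ≤ 1 * ∑ k, |w k| ^ (2:ℝ) := mul_le_mul_of_nonneg_right (min_le_left _ _) hb0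
      _ = ∑ k, |w k| ^ (2:ℝ) := one_mul _
      _ ≤ A ^ (2 / p) := key
  · -- 2 ≤ p
    set q := p / 2 with hq
    have hq1 : 1 ≤ q := by rw [hq]; linarith
    have hq0 : 0 < q := by linarith
    have hb0 : 0 ≤ ∑ k, |w k| ^ (2:ℝ) :=
      Finset.sum_nonneg fun k _ => Real.rpow_nonneg (abs_nonneg _) _
    have hhold : (∑ k, |w k| ^ (2:ℝ)) ^ q ≤ (n : ℝ) ^ (q - 1) * A := by
      have h := Real.rpow_sum_le_const_mul_sum_rpow_of_nonneg (s := Finset.univ)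
        (f := fun k => |w k| ^ (2:ℝ)) (p := q) hq1
        (fun k _ => Real.rpow_nonneg (abs_nonneg _) _)
      simp only [Finset.card_univ, Fintype.card_fin] at h
      calc (∑ k, |w k| ^ (2:ℝ)) ^ q ≤ (n : ℝ) ^ (q - 1) * ∑ k, (|w k| ^ (2:ℝ)) ^ q := h
        _ = (n : ℝ) ^ (q - 1) * A := by
            congr 1
            apply Finset.sum_congr rfl; intro k _
            rw [← Real.rpow_mul (abs_nonneg _)]
            congr 1
            rw [hq]; ring
    have key : ∑ k, |w k| ^ (2:ℝ) ≤ (n : ℝ) ^ (1 - 2 / p) * A ^ (2 / p) := by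
      have h1 : ((∑ k, |w k| ^ (2:ℝ)) ^ q) ^ (1/q) ≤ ((n : ℝ) ^ (q - 1) * A) ^ (1/q) :=
        Real.rpow_le_rpow (Real.rpow_nonneg hb0 _) hhold (by positivity)
      rw [← Real.rpow_mul hb0, mul_one_div, div_self (ne_of_gt hq0), Real.rpow_one] at h1
      rw [Real.mul_rpow (Real.rpow_nonneg hnpos.le _) hA0, ← Real.rpow_mul hnpos.le] at h1
      have he1 : (q - 1) * (1 / q) = 1 - 2 / p := by
        rw [hq]; field_simp
      have he2 : (1:ℝ) / q = 2 / p := by rw [hq]; field_simp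
      rw [he1, he2] at h1
      exact h1
    calc min 1 ((n : ℝ) ^ (2 / p - 1)) * ∑ k, |w k| ^ (2:ℝ)
        ≤ (n : ℝ) ^ (2 / p - 1) * ((n : ℝ) ^ (1 - 2 / p) * A ^ (2 / p)) := by
          apply mul_le_mul (min_le_right _ _) key hb0 (Real.rpow_nonneg hnpos.le _)
      _ = ((n : ℝ) ^ (2 / p - 1) * (n : ℝ) ^ (1 - 2 / p)) * A ^ (2 / p) := by ring
      _ = A ^ (2 / p) := by
          rw [← Real.rpow_add hnpos]
          have he : 2 / p - 1 + (1 - 2 / p) = (0:ℝ) := by ring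
          rw [he, Real.rpow_zero, one_mul]

section Mat
open Matrix
variable {m : ℕ} (P : Matrix (Fin m) (Fin m) ℝ)

lemma col_sum_one (hPsym : P.IsSymm) (hProw : ∀ i, ∑ j, P i j = 1) (j : Fin m) :
    ∑ i, P i j = 1 := by
  have : ∀ i, P i j = P j i := fun i => hPsym.apply j i
  simp_rw [this]
  exact hProw j

lemma one_sub_psd (hPsym : P.IsSymm) (hPnn : ∀ i j, 0 ≤ P i j)
    (hProw : ∀ i, ∑ j, P i j = 1) (hPpsd : P.PosSemidef) :
    (1 - P).PosSemidef := by
  rw [Matrix.posSemidef_iff_dotProduct_mulVec]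
  constructor
  · exact (Matrix.isHermitian_one).sub hPpsd.1
  · intro u
    have hstar : star u = u := rfl
    rw [hstar, Matrix.sub_mulVec, Matrix.one_mulVec, dotProduct_sub]
    have hquad : u ⬝ᵥ (P *ᵥ u) = ∑ i, ∑ j, P i j * u i * u j := by
      simp only [dotProduct, Matrix.mulVec, dotProduct, Finset.mul_sum]
      apply Finset.sum_congr rfl; intro i _
      apply Finset.sum_congr rfl; intro j _
      ring
    have hself : u ⬝ᵥ u = ∑ i, u i ^ 2 := by
      simp only [dotProduct]; apply Finset.sum_congr rfl; intro i _; ring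
    have expand : ∑ i, ∑ j, P i j * (u i - u j) ^ 2
        = 2 * (∑ i, u i ^ 2) - 2 * ∑ i, ∑ j, P i j * u i * u j := by
      have h1 : ∀ i j, P i j * (u i - u j) ^ 2
          = P i j * u i ^ 2 - 2 * (P i j * u i * u j) + P i j * u j ^ 2 := by
        intro i j; ring
      simp_rw [h1, Finset.sum_add_distrib, Finset.sum_sub_distrib, ← Finset.sum_mul,
        ← Finset.mul_sum]
      rw [Finset.sum_comm (f := fun i j => P i j * u j ^ 2)]
      simp_rw [← Finset.sum_mul, hProw, col_sum_one P hPsym hProw, one_mul]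
      ring
    have hnn : 0 ≤ ∑ i, ∑ j, P i j * (u i - u j) ^ 2 :=
      Finset.sum_nonneg fun i _ => Finset.sum_nonneg fun j _ =>
        mul_nonneg (hPnn i j) (sq_nonneg _)
    rw [hself, hquad]
    linarith [expand ▸ hnn]

lemma sub_sq_psd (hPsym : P.IsSymm) (hPnn : ∀ i j, 0 ≤ P i j)
    (hProw : ∀ i, ∑ j, P i j = 1) (hPpsd : P.PosSemidef) :
    (P - P * P).PosSemidef := by
  obtain ⟨S, hSherm, hSS⟩ : ∃ S : Matrix (Fin m) (Fin m) ℝ, S.IsHermitian ∧ S * S = P :=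
    by
      open scoped MatrixOrder in
      exact ⟨CFC.sqrt P, (CFC.sqrt_nonneg P).posSemidef.1, CFC.sqrt_mul_sqrt_self P hPpsd.nonneg⟩
  have h1 := (one_sub_psd P hPsym hPnn hProw hPpsd).mul_mul_conjTranspose_same S
  have heq : S * (1 - P) * Sᴴ = P - P * P := by
    rw [hSherm.eq, ← hSS]
    noncomm_ring
  rwa [heq] at h1

lemma quad_ineq (hPsym : P.IsSymm) (hPnn : ∀ i j, 0 ≤ P i j)
    (hProw : ∀ i, ∑ j, P i j = 1) (hPpsd : P.PosSemidef) (u : Fin m → ℝ) :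
    ∑ i, (u i - P.mulVec u i) ^ 2 ≤ ∑ i, (u i) ^ 2 - ∑ i, (P.mulVec u i) ^ 2 := by
  have h := (sub_sq_psd P hPsym hPnn hProw hPpsd).dotProduct_mulVec_nonneg u
  have hstar : star u = u := rfl
  rw [hstar, Matrix.sub_mulVec, dotProduct_sub] at h
  have h2 : u ⬝ᵥ ((P * P) *ᵥ u) = ∑ i, (P.mulVec u i) ^ 2 := by
    rw [← Matrix.mulVec_mulVec, Matrix.dotProduct_mulVec, ← Matrix.mulVec_transpose,
      hPsym.eq]
    simp only [dotProduct]
    apply Finset.sum_congr rfl; intro i _; ring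
  have h3 : u ⬝ᵥ (P *ᵥ u) = ∑ i, u i * P.mulVec u i := rfl
  rw [h2, h3] at h
  have expand : ∑ i, (u i - P.mulVec u i) ^ 2
      = ∑ i, (u i) ^ 2 - 2 * ∑ i, u i * P.mulVec u i + ∑ i, (P.mulVec u i) ^ 2 := by
    simp_rw [sub_sq, Finset.sum_add_distrib, Finset.sum_sub_distrib, Finset.mul_sum]
    ring
  linarith
end Mat

section Mat2
open Matrix
variable {m n : ℕ} (P : Matrix (Fin m) (Fin m) ℝ)

lemma coord_ineq (hPsym : P.IsSymm) (hPnn : ∀ i j, 0 ≤ P i j)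
    (hProw : ∀ i, ∑ j, P i j = 1) (hPpsd : P.PosSemidef) (a b : Fin m → ℝ) :
    ∑ i, (b i - P.mulVec b i) ^ 2 ≤ ∑ i, ∑ j, P i j * (a i - b j) ^ 2 := by
  have e1 : ∑ i, ∑ j, P i j * (a i - b j) ^ 2
      = ∑ i, (a i) ^ 2 - 2 * ∑ i, a i * P.mulVec b i + ∑ j, (b j) ^ 2 := by
    have h1 : ∀ i j, P i j * (a i - b j) ^ 2
        = P i j * a i ^ 2 - 2 * (a i * (P i j * b j)) + P i j * b j ^ 2 := by
      intro i j; ring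
    simp_rw [h1, Finset.sum_add_distrib, Finset.sum_sub_distrib, ← Finset.sum_mul,
      ← Finset.mul_sum, hProw, one_mul]
    rw [Finset.sum_comm (f := fun i j => P i j * b j ^ 2)]
    simp_rw [← Finset.sum_mul, col_sum_one P hPsym hProw, one_mul]
    have : ∑ i, a i * P.mulVec b i = ∑ i, ∑ j, a i * (P i j * b j) := by
      apply Finset.sum_congr rfl; intro i _
      simp only [Matrix.mulVec, dotProduct, Finset.mul_sum]
    rw [this]
    simp_rw [Finset.mul_sum]
  have f1 : ∑ i, (a i - P.mulVec b i) ^ 2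
      = ∑ i, (a i) ^ 2 - 2 * ∑ i, a i * P.mulVec b i + ∑ i, (P.mulVec b i) ^ 2 := by
    simp_rw [sub_sq, Finset.sum_add_distrib, Finset.sum_sub_distrib, Finset.mul_sum]
    ring
  have f2 : (0:ℝ) ≤ ∑ i, (a i - P.mulVec b i) ^ 2 :=
    Finset.sum_nonneg fun i _ => sq_nonneg _
  have f3 := quad_ineq P hPsym hPnn hProw hPpsd b
  linarith

lemma coordnorm (v : EuclideanSpace ℝ (Fin n)) : ‖v‖ ^ 2 = ∑ k, (v k) ^ 2 := by
  rw [EuclideanSpace.norm_eq, Real.sq_sqrt (Finset.sum_nonneg fun k _ => sq_nonneg _)]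
  apply Finset.sum_congr rfl; intro k _
  rw [Real.norm_eq_abs, sq_abs]

lemma lift_ineq (hPsym : P.IsSymm) (hPnn : ∀ i j, 0 ≤ P i j)
    (hProw : ∀ i, ∑ j, P i j = 1) (hPpsd : P.PosSemidef)
    (X Y : Fin m → EuclideanSpace ℝ (Fin n)) :
    ∑ i, ‖X i - ∑ j, P i j • X j‖ ^ 2 ≤ ∑ i, ∑ j, P i j * ‖Y i - X j‖ ^ 2 := by
  have happ : ∀ i k, (X i - ∑ j, P i j • X j) k
      = X i k - P.mulVec (fun j => X j k) i := by
    intro i k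
    rw [PiLp.sub_apply]
    congr 1
    rw [show (∑ j, P i j • X j) k = ∑ j, (P i j • X j) k from by simp]
    simp [Matrix.mulVec, dotProduct, PiLp.smul_apply]
  calc ∑ i, ‖X i - ∑ j, P i j • X j‖ ^ 2
      = ∑ k, ∑ i, ((fun j => X j k) i - P.mulVec (fun j => X j k) i) ^ 2 := by
        rw [Finset.sum_comm]
        apply Finset.sum_congr rfl; intro i _
        rw [coordnorm]
        apply Finset.sum_congr rfl; intro k _
        rw [happ]
    _ ≤ ∑ k, ∑ i, ∑ j, P i j * ((fun j => Y j k) i - (fun j => X j k) j) ^ 2 := by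
        apply Finset.sum_le_sum; intro k _
        exact coord_ineq P hPsym hPnn hProw hPpsd _ _
    _ = ∑ i, ∑ j, P i j * ‖Y i - X j‖ ^ 2 := by
        rw [Finset.sum_comm]
        apply Finset.sum_congr rfl; intro i _
        rw [Finset.sum_comm]
        apply Finset.sum_congr rfl; intro j _
        rw [coordnorm, Finset.mul_sum]
        apply Finset.sum_congr rfl; intro k _
        rw [PiLp.sub_apply]
end Mat2

/-- One-step Lyapunov descent of Bregman PDMM: `V(t) − V(t+1) ≥ R(t+1)`. -/
theorem bregman_pdmm_lyapunov_descent {n m : ℕ}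
    (𝒳 : Set (EuclideanSpace ℝ (Fin n)))
    (hXne : 𝒳.Nonempty) (hXclosed : IsClosed 𝒳) (hXconv : Convex ℝ 𝒳)
    (f : Fin m → EuclideanSpace ℝ (Fin n) → ℝ)
    (hf : ∀ i, ConvexOn ℝ Set.univ (f i))
    (P : Matrix (Fin m) (Fin m) ℝ) (hPsym : P.IsSymm)
    (hPnn : ∀ i j, 0 ≤ P i j) (hProw : ∀ i, ∑ j, P i j = 1) (hPpsd : P.PosSemidef)
    (φ : EuclideanSpace ℝ (Fin n) → ℝ)
    (hφd : Differentiable ℝ φ) (hφc : ConvexOn ℝ Set.univ φ)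
    (φi : Fin m → EuclideanSpace ℝ (Fin n) → ℝ)
    (hφid : ∀ i, Differentiable ℝ (φi i)) (hφic : ∀ i, ConvexOn ℝ Set.univ (φi i))
    (μ p σ ρ τ γ : ℝ) (δ : Fin m → ℝ)
    (hμ : 0 < μ) (hp : 1 ≤ p)
    (hstrong : ∀ u ∈ 𝒳, ∀ v ∈ 𝒳, μ / 2 * lpnorm p (u - v) ^ 2 ≤ breg φ u v)
    (hσ : σ = min 1 ((n : ℝ) ^ (2 / p - 1)))
    (hρ : 0 < ρ) (hτ : 0 < τ) (hδ : ∀ i, 0 ≤ δ i)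
    (hγ0 : 0 < γ) (hγ : γ < μ * σ) (hτρ : τ ≤ ρ * (μ * σ - γ))
    (x y ν : ℕ → Fin m → EuclideanSpace ℝ (Fin n))
    (hxX : ∀ t i, x t i ∈ 𝒳) (hyX : ∀ t i, y t i ∈ 𝒳)
    (t : ℕ)
    (hmirror : ∀ s ∈ ({t, t + 1} : Set ℕ), ∀ i, ∀ u ∈ 𝒳,
      0 ≤ ∑ j, P i j * ⟪gradient φ (y s i) - gradient φ (x s j), u - y s i⟫)
    (hprimal : ∀ i, ∃ g : EuclideanSpace ℝ (Fin n),
      (∀ v ∈ 𝒳, 0 ≤ ⟪g, x (t + 1) i - v⟫) ∧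
      ∀ v, f i v ≥ f i (x (t + 1) i) +
        ⟪-ν t i + (∑ j, P i j • ν t j)
            - ρ • (gradient φ (x (t + 1) i) - gradient φ (y t i))
            - δ i • (gradient (φi i) (x (t + 1) i) - gradient (φi i) (x t i))
            - g, v - x (t + 1) i⟫)
    (hdual : ∀ i, ν (t + 1) i =
      ν t i + τ • (x (t + 1) i - ∑ j, P i j • x (t + 1) j))
    (xstar : EuclideanSpace ℝ (Fin n)) (hxstar : xstar ∈ 𝒳)
    (νstar : Fin m → EuclideanSpace ℝ (Fin n))
    (hkkt : ∀ i, ∃ g : EuclideanSpace ℝ (Fin n),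
      (∀ v ∈ 𝒳, 0 ≤ ⟪g, xstar - v⟫) ∧
      ∀ v, f i v ≥ f i xstar +
        ⟪-νstar i + (∑ j, P i j • νstar j) - g, v - xstar⟫)
    (V : ℕ → ℝ)
    (hV : ∀ s, V s =
      1 / (2 * τ * ρ) * ∑ i, ‖νstar i - ν s i‖ ^ 2
        + (∑ i, breg φ xstar (y s i))
        + ∑ i, δ i / ρ * breg (φi i) xstar (x s i))
    (R : ℝ)
    (hR : R =
      γ / 2 * ∑ i, ‖x (t + 1) i - ∑ j, P i j • x (t + 1) j‖ ^ 2
        + (∑ i, breg φ (x (t + 1) i) (y t i))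
        + ∑ i, δ i / ρ * breg (φi i) (x (t + 1) i) (x t i)) :
    V t - V (t + 1) ≥ R := by
  -- abbreviations via facts
  have hRr : (0:ℝ) ≤ ∑ i, ‖x (t + 1) i - ∑ j, P i j • x (t + 1) j‖ ^ 2 :=
    Finset.sum_nonneg fun i _ => sq_nonneg _
  -- dual update identity, per i
  have key3 : ∀ i, ‖νstar i - ν (t + 1) i‖ ^ 2
      = ‖νstar i - ν t i‖ ^ 2
        - 2 * τ * ⟪νstar i - ν t i, x (t + 1) i - ∑ j, P i j • x (t + 1) j⟫
        + τ ^ 2 * ‖x (t + 1) i - ∑ j, P i j • x (t + 1) j‖ ^ 2 := by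
    intro i
    have hd : νstar i - ν (t + 1) i
        = (νstar i - ν t i) - τ • (x (t + 1) i - ∑ j, P i j • x (t + 1) j) := by
      rw [hdual i, sub_add_eq_sub_sub]
    rw [hd, norm_sub_sq_real, real_inner_smul_right, norm_smul, Real.norm_eq_abs,
      mul_pow, sq_abs]
    ring
  have f1 : (∑ i, ‖νstar i - ν t i‖ ^ 2) - (∑ i, ‖νstar i - ν (t + 1) i‖ ^ 2)
      + τ ^ 2 * ∑ i, ‖x (t + 1) i - ∑ j, P i j • x (t + 1) j‖ ^ 2
      = 2 * τ * ∑ i, ⟪νstar i - ν t i, x (t + 1) i - ∑ j, P i j • x (t + 1) j⟫ := by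
    have h := Finset.sum_congr rfl (fun i (_ : i ∈ Finset.univ) => key3 i)
    rw [Finset.sum_add_distrib, Finset.sum_sub_distrib] at h
    rw [← Finset.mul_sum, ← Finset.mul_sum] at h
    linarith
  have key1 : ∀ i, ⟪(νstar i - ν t i) - ∑ j, P i j • (νstar j - ν t j), xstar - x (t + 1) i⟫
      ≤ ρ * ⟪gradient φ (x (t + 1) i) - gradient φ (y t i), xstar - x (t + 1) i⟫
        + δ i * ⟪gradient (φi i) (x (t + 1) i) - gradient (φi i) (x t i), xstar - x (t + 1) i⟫ := by
    intro i
    obtain ⟨g, hg1, hg2⟩ := hprimal i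
    obtain ⟨G, hG1, hG2⟩ := hkkt i
    have h1 := hg2 xstar
    have h2 := hG2 (x (t + 1) i)
    have hg := hg1 xstar hxstar
    have hG := hG1 (x (t + 1) i) (hxX (t + 1) i)
    have hxs : x (t + 1) i - xstar = -(xstar - x (t + 1) i) := by rw [neg_sub]
    rw [hxs, inner_neg_right] at h2
    rw [hxs, inner_neg_right] at hg
    have hexp : ⟪-ν t i + (∑ j, P i j • ν t j)
            - ρ • (gradient φ (x (t + 1) i) - gradient φ (y t i))
            - δ i • (gradient (φi i) (x (t + 1) i) - gradient (φi i) (x t i))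
            - g, xstar - x (t + 1) i⟫
        - ⟪-νstar i + (∑ j, P i j • νstar j) - G, xstar - x (t + 1) i⟫
        = ⟪(νstar i - ν t i) - ∑ j, P i j • (νstar j - ν t j), xstar - x (t + 1) i⟫
          - ρ * ⟪gradient φ (x (t + 1) i) - gradient φ (y t i), xstar - x (t + 1) i⟫
          - δ i * ⟪gradient (φi i) (x (t + 1) i) - gradient (φi i) (x t i),
              xstar - x (t + 1) i⟫
          - ⟪g, xstar - x (t + 1) i⟫ + ⟪G, xstar - x (t + 1) i⟫ := by
      simp only [inner_sub_left, inner_add_left, inner_neg_left, sum_inner,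
        real_inner_smul_left, mul_sub, Finset.sum_sub_distrib]
      ring
    linarith [h1, h2, hg, hG, hexp]
  have key2 : ∑ i, ⟪(νstar i - ν t i) - ∑ j, P i j • (νstar j - ν t j), xstar - x (t + 1) i⟫
      = -∑ i, ⟪νstar i - ν t i, x (t + 1) i - ∑ j, P i j • x (t + 1) j⟫ := by
    have hA : ∀ i, ⟪(νstar i - ν t i) - ∑ j, P i j • (νstar j - ν t j), xstar - x (t + 1) i⟫
        = (⟪νstar i - ν t i, xstar⟫ - ⟪νstar i - ν t i, x (t + 1) i⟫)
          - ∑ j, P i j * (⟪νstar j - ν t j, xstar⟫ - ⟪νstar j - ν t j, x (t + 1) i⟫) := by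
      intro i
      rw [inner_sub_left, sum_inner, inner_sub_right]
      congr 1
      apply Finset.sum_congr rfl; intro j _
      rw [real_inner_smul_left, inner_sub_right]
    have hB : ∀ i, ⟪νstar i - ν t i, x (t + 1) i - ∑ j, P i j • x (t + 1) j⟫
        = ⟪νstar i - ν t i, x (t + 1) i⟫
          - ∑ j, P i j * ⟪νstar i - ν t i, x (t + 1) j⟫ := by
      intro i
      rw [inner_sub_right, inner_sum]
      congr 1
      apply Finset.sum_congr rfl; intro j _
      rw [real_inner_smul_right]
    simp_rw [hA, hB, mul_sub, Finset.sum_sub_distrib]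
    have hc : ∑ i, ∑ j, P i j * ⟪νstar j - ν t j, xstar⟫
        = ∑ i, ⟪νstar i - ν t i, xstar⟫ := by
      rw [Finset.sum_comm]
      apply Finset.sum_congr rfl; intro j _
      rw [← Finset.sum_mul, col_sum_one P hPsym hProw, one_mul]
    have hd : ∑ i, ∑ j, P i j * ⟪νstar j - ν t j, x (t + 1) i⟫
        = ∑ i, ∑ j, P i j * ⟪νstar i - ν t i, x (t + 1) j⟫ := by
      rw [Finset.sum_comm]
      apply Finset.sum_congr rfl; intro a _
      apply Finset.sum_congr rfl; intro b _
      rw [hPsym.apply a b]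
    linarith [hc, hd]
  -- three-point rewrites
  have hI1 : ∀ i, ⟪gradient φ (x (t + 1) i) - gradient φ (y t i), xstar - x (t + 1) i⟫
      = breg φ xstar (y t i) - breg φ xstar (x (t + 1) i) - breg φ (x (t + 1) i) (y t i) := by
    intro i
    have h := breg_three_point φ xstar (x (t + 1) i) (y t i)
    rw [show gradient φ (x (t + 1) i) - gradient φ (y t i)
        = -(gradient φ (y t i) - gradient φ (x (t + 1) i)) by rw [neg_sub],
      inner_neg_left, h]
    ring
  have hI2 : ∀ i, ⟪gradient (φi i) (x (t + 1) i) - gradient (φi i) (x t i), xstar - x (t + 1) i⟫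
      = breg (φi i) xstar (x t i) - breg (φi i) xstar (x (t + 1) i)
        - breg (φi i) (x (t + 1) i) (x t i) := by
    intro i
    have h := breg_three_point (φi i) xstar (x (t + 1) i) (x t i)
    rw [show gradient (φi i) (x (t + 1) i) - gradient (φi i) (x t i)
        = -(gradient (φi i) (x t i) - gradient (φi i) (x (t + 1) i)) by rw [neg_sub],
      inner_neg_left, h]
    ring
  have f2 : -∑ i, ⟪νstar i - ν t i, x (t + 1) i - ∑ j, P i j • x (t + 1) j⟫
      ≤ ρ * ((∑ i, breg φ xstar (y t i)) - (∑ i, breg φ xstar (x (t + 1) i))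
          - ∑ i, breg φ (x (t + 1) i) (y t i))
        + ((∑ i, δ i * breg (φi i) xstar (x t i))
          - (∑ i, δ i * breg (φi i) xstar (x (t + 1) i))
          - ∑ i, δ i * breg (φi i) (x (t + 1) i) (x t i)) := by
    rw [← key2]
    calc ∑ i, ⟪(νstar i - ν t i) - ∑ j, P i j • (νstar j - ν t j), xstar - x (t + 1) i⟫
        ≤ ∑ i, (ρ * ⟪gradient φ (x (t + 1) i) - gradient φ (y t i), xstar - x (t + 1) i⟫
            + δ i * ⟪gradient (φi i) (x (t + 1) i) - gradient (φi i) (x t i),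
                xstar - x (t + 1) i⟫) :=
          Finset.sum_le_sum fun i _ => key1 i
      _ = _ := by
          simp_rw [hI1, hI2, mul_sub]
          rw [Finset.sum_add_distrib, Finset.sum_sub_distrib, Finset.sum_sub_distrib,
            Finset.sum_sub_distrib, Finset.sum_sub_distrib, ← Finset.mul_sum,
            ← Finset.mul_sum, ← Finset.mul_sum]
          try ring
  -- mirror step at t+1
  have f3 : μ * σ / 2 * ∑ i, ‖x (t + 1) i - ∑ j, P i j • x (t + 1) j‖ ^ 2
      ≤ (∑ i, breg φ xstar (x (t + 1) i)) - ∑ i, breg φ xstar (y (t + 1) i) := by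
    have hμσ : 0 < μ * σ := lt_trans hγ0 hγ
    have hmir := hmirror (t + 1) (by simp)
    have hb : ∀ u ∈ 𝒳, ∀ v ∈ 𝒳, μ * σ / 2 * ‖u - v‖ ^ 2 ≤ breg φ u v := by
      intro u hu v hv
      calc μ * σ / 2 * ‖u - v‖ ^ 2
          = μ / 2 * (min 1 ((n : ℝ) ^ (2 / p - 1)) * ‖u - v‖ ^ 2) := by rw [hσ]; ring
        _ ≤ μ / 2 * lpnorm p (u - v) ^ 2 :=
            mul_le_mul_of_nonneg_left (lpnorm_sq_lower hp (u - v)) (by positivity)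
        _ ≤ breg φ u v := hstrong u hu v hv
    have step : ∀ i, breg φ xstar (y (t + 1) i)
        + μ * σ / 2 * ∑ j, P i j * ‖y (t + 1) i - x (t + 1) j‖ ^ 2
        ≤ ∑ j, P i j * breg φ xstar (x (t + 1) j) := by
      intro i
      have h0 := hmir i xstar hxstar
      have hterm : ∀ j, P i j * ⟪gradient φ (y (t + 1) i) - gradient φ (x (t + 1) j),
            xstar - y (t + 1) i⟫
          = P i j * (breg φ xstar (x (t + 1) j) - breg φ xstar (y (t + 1) i)
              - breg φ (y (t + 1) i) (x (t + 1) j)) := by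
        intro j
        congr 1
        have h := breg_three_point φ xstar (y (t + 1) i) (x (t + 1) j)
        rw [show gradient φ (y (t + 1) i) - gradient φ (x (t + 1) j)
            = -(gradient φ (x (t + 1) j) - gradient φ (y (t + 1) i)) by rw [neg_sub],
          inner_neg_left, h]
        ring
      rw [Finset.sum_congr rfl fun j _ => hterm j] at h0
      simp_rw [mul_sub, Finset.sum_sub_distrib, ← Finset.sum_mul] at h0
      rw [hProw i, one_mul] at h0
      have hsb : μ * σ / 2 * ∑ j, P i j * ‖y (t + 1) i - x (t + 1) j‖ ^ 2
          ≤ ∑ j, P i j * breg φ (y (t + 1) i) (x (t + 1) j) := by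
        rw [Finset.mul_sum]
        apply Finset.sum_le_sum; intro j _
        have h1 := hb (y (t + 1) i) (hyX (t + 1) i) (x (t + 1) j) (hxX (t + 1) j)
        calc μ * σ / 2 * (P i j * ‖y (t + 1) i - x (t + 1) j‖ ^ 2)
            = P i j * (μ * σ / 2 * ‖y (t + 1) i - x (t + 1) j‖ ^ 2) := by ring
          _ ≤ P i j * breg φ (y (t + 1) i) (x (t + 1) j) :=
              mul_le_mul_of_nonneg_left h1 (hPnn i j)
      linarith
    have hsumstep := Finset.sum_le_sum fun i (_ : i ∈ Finset.univ) => step i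
    rw [Finset.sum_add_distrib, ← Finset.mul_sum] at hsumstep
    have hcol : ∑ i, ∑ j, P i j * breg φ xstar (x (t + 1) j)
        = ∑ i, breg φ xstar (x (t + 1) i) := by
      rw [Finset.sum_comm]
      apply Finset.sum_congr rfl; intro j _
      rw [← Finset.sum_mul, col_sum_one P hPsym hProw, one_mul]
    rw [hcol] at hsumstep
    have hlift := lift_ineq P hPsym hPnn hProw hPpsd (x (t + 1)) (y (t + 1))
    have hmul := mul_le_mul_of_nonneg_left hlift (by positivity : (0:ℝ) ≤ μ * σ / 2)
    linarith
  -- rewrite V and R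
  have hdiv : ∀ (c : Fin m → ℝ), ∑ i, δ i / ρ * c i = (∑ i, δ i * c i) / ρ := by
    intro c
    rw [Finset.sum_div]
    apply Finset.sum_congr rfl; intro i _; ring
  have hVt : V t = 1 / (2 * τ * ρ) * ∑ i, ‖νstar i - ν t i‖ ^ 2
      + (∑ i, breg φ xstar (y t i))
      + (∑ i, δ i * breg (φi i) xstar (x t i)) / ρ := by
    rw [hV t, hdiv fun i => breg (φi i) xstar (x t i)]
  have hVt1 : V (t + 1) = 1 / (2 * τ * ρ) * ∑ i, ‖νstar i - ν (t + 1) i‖ ^ 2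
      + (∑ i, breg φ xstar (y (t + 1) i))
      + (∑ i, δ i * breg (φi i) xstar (x (t + 1) i)) / ρ := by
    rw [hV (t + 1), hdiv fun i => breg (φi i) xstar (x (t + 1) i)]
  have hRR : R = γ / 2 * ∑ i, ‖x (t + 1) i - ∑ j, P i j • x (t + 1) j‖ ^ 2
      + (∑ i, breg φ (x (t + 1) i) (y t i))
      + (∑ i, δ i * breg (φi i) (x (t + 1) i) (x t i)) / ρ := by
    rw [hR, hdiv fun i => breg (φi i) (x (t + 1) i) (x t i)]
  rw [ge_iff_le, ← sub_nonneg, hVt, hVt1, hRR]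
  set Sa := ∑ i, ‖νstar i - ν t i‖ ^ 2 with hSa
  set Sb := ∑ i, ‖νstar i - ν (t + 1) i‖ ^ 2 with hSb
  set Rr := ∑ i, ‖x (t + 1) i - ∑ j, P i j • x (t + 1) j‖ ^ 2 with hRrdef
  set SAr := ∑ i, ⟪νstar i - ν t i, x (t + 1) i - ∑ j, P i j • x (t + 1) j⟫ with hSAr
  set Bsy := ∑ i, breg φ xstar (y t i) with hBsy
  set Bsy' := ∑ i, breg φ xstar (y (t + 1) i) with hBsy'
  set Bsx := ∑ i, breg φ xstar (x (t + 1) i) with hBsx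
  set Bxy := ∑ i, breg φ (x (t + 1) i) (y t i) with hBxy
  set D1 := ∑ i, δ i * breg (φi i) xstar (x t i) with hD1
  set D2 := ∑ i, δ i * breg (φi i) xstar (x (t + 1) i) with hD2
  set D3 := ∑ i, δ i * breg (φi i) (x (t + 1) i) (x t i) with hD3
  clear_value Sa Sb Rr SAr Bsy Bsy' Bsx Bxy D1 D2 D3
  have hpos : (0:ℝ) < 2 * τ * ρ := by positivity
  have key : (0:ℝ) ≤ (Sa - Sb) + 2 * τ * ρ * (Bsy - Bsy') + 2 * τ * (D1 - D2)
      - 2 * τ * ρ * (γ / 2 * Rr + Bxy) - 2 * τ * D3 := by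
    have f2' := mul_le_mul_of_nonneg_left f2 (by positivity : (0:ℝ) ≤ 2 * τ)
    have f3' := mul_le_mul_of_nonneg_left f3 (by positivity : (0:ℝ) ≤ 2 * τ * ρ)
    have f4 : (0:ℝ) ≤ τ * (Rr * (ρ * (μ * σ - γ) - τ)) :=
      mul_nonneg hτ.le (mul_nonneg hRr (by linarith))
    linarith [f1, f2', f3', f4]
  have heq : 1 / (2 * τ * ρ) * Sa + Bsy + D1 / ρ
      - (1 / (2 * τ * ρ) * Sb + Bsy' + D2 / ρ) - (γ / 2 * Rr + Bxy + D3 / ρ)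
      = 1 / (2 * τ * ρ) * ((Sa - Sb) + 2 * τ * ρ * (Bsy - Bsy') + 2 * τ * (D1 - D2)
        - 2 * τ * ρ * (γ / 2 * Rr + Bxy) - 2 * τ * D3) := by
    field_simp
    ring
  rw [heq]
  exact mul_nonneg (by positivity) key
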